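/- Let N ≥ 1, let G = (V, E) be a finite simple undirected graph on vertices {1, …, n}, let M_1, …, M_n ∈ SE(N) be represented as (N+1)×(N+1) homogeneous matrices, and let M ∈ ℝ^{(N+1)n×(N+1)} be their vertical stack. Define L ∈ ℝ^{(N+1)n×(N+1)n} blockwise by: the (i,i)-th (N+1)×(N+1) block is d_i·I_{N+1} with d_i the degree of vertex i, the (i,j)-th block for (i,j) ∈ E is −M_i M_j⁻¹, and all remaining blocks are zero. Then L·M = 0; moreover, if G is connected then the null space of L is exactly (N+1)-dimensional and the columns of M form a basis of it. -/

import Mathlib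

open Matrix

noncomputable section

/-- Index type for (N+1)×(N+1) homogeneous matrices. -/
abbrev IdxN (N : ℕ) : Type := Fin N ⊕ Fin 1

/-- The (N+1)×(N+1) homogeneous matrix `[[R, t],[0,1]]`. -/
def homogN (N : ℕ) (R : Matrix (Fin N) (Fin N) ℝ) (t : Fin N → ℝ) :
    Matrix (IdxN N) (IdxN N) ℝ :=
  Matrix.fromBlocks R (Matrix.of fun i (_ : Fin 1) => t i) 0 1

/-- `A` is an SE(N) element written as an (N+1)×(N+1) homogeneous matrix. -/
def IsSEN (N : ℕ) (A : Matrix (IdxN N) (IdxN N) ℝ) : Prop :=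
  ∃ (R : Matrix (Fin N) (Fin N) ℝ) (t : Fin N → ℝ),
    Rᵀ * R = 1 ∧ R.det = 1 ∧ A = homogN N R t

lemma IsSEN.det_eq_one {N : ℕ} {A : Matrix (IdxN N) (IdxN N) ℝ} (h : IsSEN N A) :
    A.det = 1 := by
  obtain ⟨R, t, _hR, hdet, rfl⟩ := h
  rw [homogN, Matrix.det_fromBlocks_zero₂₁, hdet, Matrix.det_one, one_mul]

lemma IsSEN.isUnit_det {N : ℕ} {A : Matrix (IdxN N) (IdxN N) ℝ} (h : IsSEN N A) :
    IsUnit A.det := by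
  rw [h.det_eq_one]; exact isUnit_one

/-- for `M_1, …, M_n ∈ SE(N)` and a finite simple graph `G`, the block
Laplacian `L` (diagonal blocks `deg(i)·I_{N+1}`, blocks `−M_i M_j⁻¹` on edges, zero
elsewhere) satisfies `L·M = 0`; moreover if `G` is connected then the null space of
`L` is exactly (N+1)-dimensional and the columns of `M` form a basis of it. -/
theorem SEN_block_laplacian
    (N : ℕ) (hN : 1 ≤ N) (n : ℕ) (hn : 1 ≤ n)
    (G : SimpleGraph (Fin n)) [DecidableRel G.Adj]
    (Ms : Fin n → Matrix (IdxN N) (IdxN N) ℝ) (hMs : ∀ i, IsSEN N (Ms i))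
    (M : Matrix (Fin n × IdxN N) (IdxN N) ℝ)
    (hM : ∀ i r c, M (i, r) c = Ms i r c)
    (L : Matrix (Fin n × IdxN N) (Fin n × IdxN N) ℝ)
    (hL : ∀ i r j c, L (i, r) (j, c) =
      if i = j then (G.degree i : ℝ) * (if r = c then 1 else 0)
      else if G.Adj i j then -((Ms i * (Ms j)⁻¹) r c) else 0) :
    L * M = 0 ∧
      (G.Connected →
        LinearMap.ker L.mulVecLin
            = Submodule.span ℝ
                (Set.range fun c : IdxN N => fun p : Fin n × IdxN N => M p c) ∧
          LinearIndependent ℝ (fun c : IdxN N => fun p : Fin n × IdxN N => M p c) ∧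
          Module.finrank ℝ (LinearMap.ker L.mulVecLin) = N + 1) := by
  classical
  have hdet : ∀ i, IsUnit (Ms i).det := fun i => (hMs i).isUnit_det
  have hinvmul : ∀ i, (Ms i)⁻¹ * Ms i = 1 := fun i => Matrix.nonsing_inv_mul _ (hdet i)
  have hmulinv : ∀ i, Ms i * (Ms i)⁻¹ = 1 := fun i => Matrix.mul_nonsing_inv _ (hdet i)
  set i0 : Fin n := ⟨0, hn⟩ with hi0
  -- The key computation of L *ᵥ x
  have hLmul : ∀ (x : Fin n × IdxN N → ℝ) (i : Fin n) (r : IdxN N),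
      L.mulVec x (i, r) =
        (Ms i *ᵥ ((G.degree i : ℝ) • ((Ms i)⁻¹ *ᵥ fun s => x (i, s)) -
          ∑ j ∈ G.neighborFinset i, ((Ms j)⁻¹ *ᵥ fun s => x (j, s)))) r := by
    intro x i r
    have : L.mulVec x (i, r) = ∑ j : Fin n, ∑ c : IdxN N, L (i, r) (j, c) * x (j, c) := by
      rw [Matrix.mulVec, dotProduct, Fintype.sum_prod_type]
    rw [this]
    have step : ∀ j : Fin n, ∑ c : IdxN N, L (i, r) (j, c) * x (j, c) =
        (if i = j then (G.degree i : ℝ) * x (i, r) else 0) -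
          (if G.Adj i j then (Ms i *ᵥ ((Ms j)⁻¹ *ᵥ fun s => x (j, s))) r else 0) := by
      intro j
      by_cases hij : i = j
      · subst hij
        simp only [hL, if_pos rfl, if_neg (G.irrefl)]
        simp [mul_ite, ite_mul, Finset.sum_ite_eq]
      · simp only [hL, if_neg hij]
        by_cases hadj : G.Adj i j
        · simp only [if_pos hadj, Matrix.mulVec_mulVec]
          simp [Matrix.mulVec, dotProduct, neg_mul, Finset.sum_neg_distrib]
        · simp [if_neg hadj]
    rw [Finset.sum_congr rfl fun j _ => step j]
    rw [Finset.sum_sub_distrib]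
    rw [Finset.sum_ite_eq Finset.univ i (fun _ => (G.degree i : ℝ) * x (i, r))]
    simp only [Finset.mem_univ, if_pos]
    have hx : x (i, r) = (Ms i *ᵥ ((Ms i)⁻¹ *ᵥ fun s => x (i, s))) r := by
      rw [Matrix.mulVec_mulVec, hmulinv, Matrix.one_mulVec]
    rw [hx]
    rw [Matrix.mulVec_sub, Matrix.mulVec_smul]
    simp only [Pi.sub_apply, Pi.smul_apply, smul_eq_mul]
    congr 1
    have hmsum : ∀ (s : Finset (Fin n)) (f : Fin n → (IdxN N → ℝ)),
        Ms i *ᵥ (∑ j ∈ s, f j) = ∑ j ∈ s, Ms i *ᵥ f j := by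
      intro s f
      exact map_sum (Ms i).mulVecLin f s
    rw [hmsum, SimpleGraph.neighborFinset_eq_filter]
    rw [Finset.sum_apply]
    exact (Finset.sum_filter _ _).symm
  -- membership in the kernel
  have hker : ∀ x : Fin n × IdxN N → ℝ, L.mulVec x = 0 ↔
      ∀ c : IdxN N, G.lapMatrix ℝ *ᵥ (fun j => ((Ms j)⁻¹ *ᵥ fun s => x (j, s)) c) = 0 := by
    intro x
    constructor
    · intro h c
      funext i
      have h2 : ∀ i, (G.degree i : ℝ) • ((Ms i)⁻¹ *ᵥ fun s => x (i, s)) -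
          ∑ j ∈ G.neighborFinset i, ((Ms j)⁻¹ *ᵥ fun s => x (j, s)) = 0 := by
        intro i
        have hz : Ms i *ᵥ ((G.degree i : ℝ) • ((Ms i)⁻¹ *ᵥ fun s => x (i, s)) -
            ∑ j ∈ G.neighborFinset i, ((Ms j)⁻¹ *ᵥ fun s => x (j, s))) = 0 := by
          funext r
          rw [← hLmul x i r, h]; rfl
        have := congrArg (fun v => (Ms i)⁻¹ *ᵥ v) hz
        simpa [Matrix.mulVec_mulVec, hinvmul, Matrix.one_mulVec] using this
      have := congrFun (h2 i) c
      simpa [SimpleGraph.lapMatrix_mulVec_apply] using this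
    · intro h
      funext p
      obtain ⟨i, r⟩ := p
      rw [hLmul x i r]
      have hz : (G.degree i : ℝ) • ((Ms i)⁻¹ *ᵥ fun s => x (i, s)) -
          ∑ j ∈ G.neighborFinset i, ((Ms j)⁻¹ *ᵥ fun s => x (j, s)) = 0 := by
        funext c
        have := congrFun (h c) i
        simpa [SimpleGraph.lapMatrix_mulVec_apply] using this
      rw [hz, Matrix.mulVec_zero]; rfl
  -- L * M = 0
  have hLM : L * M = 0 := by
    ext p c
    obtain ⟨i, r⟩ := p
    have hcol : (L * M) (i, r) c = L.mulVec (fun q => M q c) (i, r) := by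
      simp [Matrix.mul_apply, Matrix.mulVec, dotProduct]
    rw [hcol]
    have hcolker : L.mulVec (fun q => M q c) = 0 := by
      rw [hker]
      intro c'
      have hy : ∀ j : Fin n, ((Ms j)⁻¹ *ᵥ fun s => M (j, s) c) = Pi.single c 1 := by
        intro j
        have : (fun s => M (j, s) c) = Ms j *ᵥ Pi.single c 1 := by
          funext s
          rw [hM, Matrix.mulVec_single]
          simp
        rw [this, Matrix.mulVec_mulVec, hinvmul, Matrix.one_mulVec]
      simp only [hy]
      funext i
      rw [SimpleGraph.lapMatrix_mulVec_apply]
      simp [Finset.sum_const, SimpleGraph.card_neighborFinset_eq_degree, nsmul_eq_mul]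
    rw [hcolker]; rfl
  refine ⟨hLM, fun hconn => ?_⟩
  -- columns of M
  set cols : IdxN N → (Fin n × IdxN N → ℝ) := fun c => fun p => M p c with hcols
  have hcolmem : ∀ c, cols c ∈ LinearMap.ker L.mulVecLin := by
    intro c
    rw [LinearMap.mem_ker, Matrix.mulVecLin_apply]
    funext p
    have := congrFun (congrFun hLM p) c
    simp only [Matrix.mul_apply, Matrix.zero_apply] at this
    simpa [Matrix.mulVec, dotProduct, cols] using this
  have hspan : LinearMap.ker L.mulVecLin = Submodule.span ℝ (Set.range cols) := by
    apply le_antisymm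
    · intro x hx
      rw [LinearMap.mem_ker, Matrix.mulVecLin_apply, hker] at hx
      -- all y j are equal, to v := y i0
      set v : IdxN N → ℝ := (Ms i0)⁻¹ *ᵥ fun s => x (i0, s) with hv
      have hyconst : ∀ j, ((Ms j)⁻¹ *ᵥ fun s => x (j, s)) = v := by
        intro j
        funext c
        have := hx c
        rw [SimpleGraph.lapMatrix_mulVec_eq_zero_iff_forall_reachable] at this
        exact this j i0 (hconn.preconnected j i0)
      have hxdecomp : x = ∑ c : IdxN N, v c • cols c := by
        funext p
        obtain ⟨i, r⟩ := p
        have hx2 : x (i, r) = (Ms i *ᵥ v) r := by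
          rw [← hyconst i, Matrix.mulVec_mulVec, hmulinv, Matrix.one_mulVec]
        rw [hx2]
        simp only [Matrix.mulVec, dotProduct, Finset.sum_apply, Pi.smul_apply, smul_eq_mul,
          cols, hM]
        exact Finset.sum_congr rfl fun c _ => mul_comm _ _
      rw [hxdecomp]
      exact Submodule.sum_mem _ fun c _ =>
        Submodule.smul_mem _ _ (Submodule.subset_span ⟨c, rfl⟩)
    · rw [Submodule.span_le]
      rintro _ ⟨c, rfl⟩
      exact hcolmem c
  have hli : LinearIndependent ℝ cols := by
    rw [Fintype.linearIndependent_iff]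
    intro g hg c
    have hMg : Ms i0 *ᵥ g = 0 := by
      funext r
      have := congrFun hg (i0, r)
      simp only [Finset.sum_apply, Pi.smul_apply, smul_eq_mul, Pi.zero_apply, cols, hM] at this
      simp only [Matrix.mulVec, dotProduct, Pi.zero_apply]
      rw [← this]
      exact Finset.sum_congr rfl fun c _ => mul_comm _ _
    have := congrArg (fun w => (Ms i0)⁻¹ *ᵥ w) hMg
    simp only [Matrix.mulVec_mulVec, hinvmul, Matrix.one_mulVec, Matrix.mulVec_zero] at this
    exact congrFun this c
  refine ⟨hspan, hli, ?_⟩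
  rw [hspan, finrank_span_eq_card hli]
  simp [IdxN]
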